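/- For g(x) = C 4^{m+1} x^{m+1}(1−x)^{m+1} on [0,1] (zero elsewhere) with C chosen so that ∫₀¹ g = 1, the normalizing constant satisfies 1 ≤ C ≤ 2e√m for all integers m ≥ 2. -/

import Mathlib

open MeasureTheory intervalIntegral

/-- Key elementary inequality: `exp(-1) ≤ (1 - 1/(2m))^(m+1)` for `m ≥ 2`. -/
lemma bump_key_ineq (m : ℕ) (hm : 2 ≤ m) :
    Real.exp (-1) ≤ (1 - 1 / (2 * (m : ℝ))) ^ (m + 1) := by
  have hM : (2:ℝ) ≤ (m:ℝ) := by exact_mod_cast hm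
  set t : ℝ := 1 / (2 * (m:ℝ) - 1) with ht
  have h2m1 : (0:ℝ) < 2 * (m:ℝ) - 1 := by linarith
  have htpos : 0 < t := by rw [ht]; positivity
  have h1 : Real.exp (-t) ≤ 1 - 1 / (2 * (m:ℝ)) := by
    have hexp : 1 + t ≤ Real.exp t := by
      have := Real.add_one_le_exp t; linarith
    have h1t : (0:ℝ) < 1 + t := by linarith
    have hinv : (Real.exp t)⁻¹ ≤ (1 + t)⁻¹ := by
      apply inv_anti₀ h1t hexp
    have heq : (1 + t)⁻¹ = 1 - 1 / (2 * (m:ℝ)) := by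
      rw [ht]
      rw [inv_eq_one_div, div_eq_iff (by positivity)]
      field_simp
      ring
    calc Real.exp (-t) = (Real.exp t)⁻¹ := by rw [Real.exp_neg]
    _ ≤ (1 + t)⁻¹ := hinv
    _ = 1 - 1 / (2 * (m:ℝ)) := heq
  have h2 : Real.exp (-1) ≤ Real.exp (-t) ^ (m + 1) := by
    rw [← Real.exp_nat_mul]
    apply Real.exp_le_exp.mpr
    have hle : ((m:ℝ) + 1) * t ≤ 1 := by
      rw [ht, mul_one_div, div_le_one h2m1]
      linarith
    push_cast
    nlinarith
  calc Real.exp (-1) ≤ Real.exp (-t) ^ (m + 1) := h2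
  _ ≤ (1 - 1 / (2 * (m:ℝ))) ^ (m + 1) :=
      pow_le_pow_left₀ (Real.exp_nonneg _) h1 _

set_option maxHeartbeats 1000000 in
/-- For `g(x) = C·4^{m+1} x^{m+1}(1-x)^{m+1}` on `[0,1]` with `∫₀¹ g = 1`, the normalizing
constant satisfies `1 ≤ C ≤ 2e√m` for all integers `m ≥ 2`. -/
theorem bump_normalizing_constant_bounds (m : ℕ) (hm : 2 ≤ m) (C : ℝ)
    (hC : (∫ x in (0 : ℝ)..1, C * 4 ^ (m + 1) * x ^ (m + 1) * (1 - x) ^ (m + 1)) = 1) :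
    1 ≤ C ∧ C ≤ 2 * Real.exp 1 * Real.sqrt m := by
  have hM : (2:ℝ) ≤ (m:ℝ) := by exact_mod_cast hm
  set f : ℝ → ℝ := fun x => 4 ^ (m + 1) * x ^ (m + 1) * (1 - x) ^ (m + 1) with hf
  have hfc : Continuous f := by fun_prop
  have hfx : ∀ x : ℝ, f x = (4 * (x * (1 - x))) ^ (m + 1) := by
    intro x; simp only [hf]; rw [mul_pow, mul_pow, ← mul_assoc]
  have hfnonneg : ∀ x ∈ Set.Icc (0:ℝ) 1, 0 ≤ f x := by
    intro x hx
    rw [hfx]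
    apply pow_nonneg
    have := hx.1; have := hx.2
    nlinarith
  set J := ∫ x in (0:ℝ)..1, f x with hJdef
  have hCJ : C * J = 1 := by
    rw [hJdef, ← intervalIntegral.integral_const_mul, ← hC]
    congr 1; ext x; simp only [hf]; ring
  -- upper bound for J
  have hJ1 : J ≤ 1 := by
    have hmono : J ≤ ∫ _x in (0:ℝ)..1, (1:ℝ) := by
      apply intervalIntegral.integral_mono_on (by norm_num)
        (hfc.intervalIntegrable 0 1) intervalIntegrable_const
      intro x hx
      rw [hfx]
      apply pow_le_one₀ _ _
      · have := hx.1; have := hx.2; nlinarith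
      · have := hx.1; have := hx.2; nlinarith [sq_nonneg (2*x - 1)]
    simpa using hmono
  -- lower bound for J
  set s : ℝ := Real.sqrt (2 * m) with hs
  have hs0 : 0 ≤ s := Real.sqrt_nonneg _
  have hs2 : s ^ 2 = 2 * m := Real.sq_sqrt (by positivity)
  have hs_ge : 2 ≤ s := by nlinarith
  have hspos : 0 < s := by linarith
  set a : ℝ := 1/2 - 1/(2*s) with ha
  set b : ℝ := 1/2 + 1/(2*s) with hb
  have hhalf : 1/(2*s) + 1/(2*s) = 1/s := by
    rw [← add_div, div_eq_div_iff (by positivity) hspos.ne']; ring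
  have hinvs : 1/(2*s) ≤ 1/4 := by
    rw [div_le_div_iff₀ (by positivity) (by norm_num)]
    linarith
  have hinvspos : 0 < 1/(2*s) := by positivity
  have ha0 : 0 ≤ a := by rw [ha]; linarith
  have hab : a ≤ b := by rw [ha, hb]; linarith
  have hb1 : b ≤ 1 := by rw [hb]; linarith
  have hpoint : ∀ x ∈ Set.Icc a b, Real.exp (-1) ≤ f x := by
    intro x hx
    have hx1 := hx.1
    have hx2 := hx.2
    rw [ha] at hx1; rw [hb] at hx2
    have hsq : (2*x - 1)^2 ≤ (1/s)^2 := by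
      have h1 : -(1/s) ≤ 2*x - 1 := by nlinarith
      have h2 : 2*x - 1 ≤ 1/s := by nlinarith
      nlinarith
    have hss : (1/s)^2 = 1/(2*(m:ℝ)) := by
      rw [div_pow, hs2]; norm_num
    have hlow : 1 - 1/(2*(m:ℝ)) ≤ 4 * (x * (1 - x)) := by
      have h3 : (2*x - 1)^2 ≤ 1/(2*(m:ℝ)) := by rw [← hss]; exact hsq
      nlinarith
    have hnn : (0:ℝ) ≤ 1 - 1/(2*(m:ℝ)) := by
      have : 1/(2*(m:ℝ)) ≤ 1/4 := by
        rw [div_le_div_iff₀ (by positivity) (by norm_num)]; linarith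
      linarith
    calc Real.exp (-1) ≤ (1 - 1/(2*(m:ℝ))) ^ (m+1) := bump_key_ineq m hm
    _ ≤ (4 * (x * (1 - x))) ^ (m+1) := pow_le_pow_left₀ hnn hlow _
    _ = f x := (hfx x).symm
  have hmid : (1/s) * Real.exp (-1) ≤ ∫ x in a..b, f x := by
    have h2 : ∫ _x in a..b, Real.exp (-1) ≤ ∫ x in a..b, f x :=
      intervalIntegral.integral_mono_on hab intervalIntegrable_const
        (hfc.intervalIntegrable _ _) hpoint
    have h1 : ∫ _x in a..b, Real.exp (-1) = (1/s) * Real.exp (-1) := by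
      rw [intervalIntegral.integral_const, smul_eq_mul]
      congr 1
      rw [hb, ha, show 1/2 + 1/(2*s) - (1/2 - 1/(2*s)) = 1/(2*s) + 1/(2*s) by ring, hhalf]
    rw [h1] at h2
    exact h2
  have hsplit : (∫ x in (0:ℝ)..a, f x) + (∫ x in a..b, f x) + (∫ x in b..1, f x) = J := by
    rw [hJdef]
    rw [intervalIntegral.integral_add_adjacent_intervals
      (hfc.intervalIntegrable 0 a) (hfc.intervalIntegrable a b),
      intervalIntegral.integral_add_adjacent_intervals
      (hfc.intervalIntegrable 0 b) (hfc.intervalIntegrable b 1)]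
  have hleft : 0 ≤ ∫ x in (0:ℝ)..a, f x := by
    apply intervalIntegral.integral_nonneg ha0
    intro x hx
    exact hfnonneg x ⟨hx.1, le_trans hx.2 (le_trans hab hb1)⟩
  have hright : 0 ≤ ∫ x in b..1, f x := by
    apply intervalIntegral.integral_nonneg hb1
    intro x hx
    exact hfnonneg x ⟨le_trans (le_trans ha0 hab) hx.1, hx.2⟩
  have hJlow : (1/s) * Real.exp (-1) ≤ J := by linarith
  have hexppos : 0 < Real.exp (-1) := Real.exp_pos _
  have hJpos : 0 < J := lt_of_lt_of_le (by positivity) hJlow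
  have hCpos : 0 < C := by
    rcases lt_trichotomy C 0 with h | h | h
    · nlinarith
    · rw [h] at hCJ; simp at hCJ
    · exact h
  constructor
  · nlinarith
  · -- C ≤ s * exp 1 from C * J = 1 and J ≥ (1/s) * exp(-1)
    have he : 0 < Real.exp 1 := Real.exp_pos _
    have hCle : C ≤ s * Real.exp 1 := by
      have h1 : C * ((1/s) * Real.exp (-1)) ≤ C * J :=
        mul_le_mul_of_nonneg_left hJlow (le_of_lt hCpos)
      rw [hCJ] at h1
      have h2 : Real.exp (-1) = (Real.exp 1)⁻¹ := by
        rw [← Real.exp_neg]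
      rw [h2] at h1
      have h3 : C * (1/s * (Real.exp 1)⁻¹) = C / (s * Real.exp 1) := by
        field_simp
      rw [h3] at h1
      have h4 := (div_le_one (by positivity)).mp h1
      linarith
    have hsle : s ≤ 2 * Real.sqrt m := by
      rw [hs]
      rw [Real.sqrt_mul (by norm_num : (0:ℝ) ≤ 2)]
      have h2 : Real.sqrt 2 ≤ 2 := by
        nlinarith [Real.sq_sqrt (by norm_num : (0:ℝ) ≤ 2), Real.sqrt_nonneg 2]
      have h3 := Real.sqrt_nonneg (m:ℝ)
      nlinarith
    calc C ≤ s * Real.exp 1 := hCle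
    _ ≤ 2 * Real.sqrt m * Real.exp 1 := by nlinarith
    _ = 2 * Real.exp 1 * Real.sqrt m := by ring
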